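/- The symbol of the double commutator [ℍ;[ℍ;v]]∂_x followed by ∂_x vanishes on positively-correlated frequencies: for k≠0, the k-th Fourier coefficient of ([ℍ;[ℍ;v]]f_x)_x equals (1/2π)Σ_ℓ Λ₁(k,ℓ) v̂(k−ℓ) f̂(ℓ) with Λ₁(k,ℓ) = 2(kℓ − |k||ℓ|); in particular Λ₁(k,ℓ) = 0 whenever kℓ ≥ 0, and |Λ₁(k,ℓ)| ≤ 2(k−ℓ)² for all k,ℓ ∈ ℤ. -/

import Mathlib

open MeasureTheory Complex
open scoped Real

noncomputable section

instance : Fact (0 < 2 * π) := ⟨by positivity⟩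

/-- The one-dimensional torus `ℝ/(2πℤ)`. -/
abbrev Torus := AddCircle (2 * π)

/-- The discrete Hilbert transform, defined on the Fourier side by
`(ℍ[f])^(k) = -i sgn(k) f̂(k)`. -/
noncomputable def hilbertT (f : Torus → ℂ) : Torus → ℂ := fun x =>
  ∑' k : ℤ, (-Complex.I * ((Int.sign k : ℤ) : ℂ)) * fourierCoeff f k * fourier k x

/-- The spatial derivative, defined on the Fourier side by `(f_x)^(k) = ik f̂(k)`. -/
noncomputable def derivT (f : Torus → ℂ) : Torus → ℂ := fun x =>
  ∑' k : ℤ, (Complex.I * (k : ℂ)) * fourierCoeff f k * fourier k x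

/-- The Sobolev norm `‖f‖_{H^s(𝕋)}`, with
`‖f‖² = (1/2π) Σ (1+|k|)^{2s} |f̂(k)|²` expressed through the
normalized Fourier coefficients of Mathlib. -/
noncomputable def hsNorm (s : ℝ) (f : Torus → ℂ) : ℝ :=
  Real.sqrt (2 * π * ∑' k : ℤ, (1 + |(k : ℝ)|) ^ (2 * s) * ‖fourierCoeff f k‖ ^ 2)

/-- Membership in the Sobolev space `H^s(𝕋)`. -/
def MemHs (s : ℝ) (f : Torus → ℂ) : Prop :=
  Summable fun k : ℤ => (1 + |(k : ℝ)|) ^ (2 * s) * ‖fourierCoeff f k‖ ^ 2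

/-- `f` is represented pointwise by its Fourier series (a quantitative way of
saying that `f` is sufficiently smooth / is the nice representative). -/
def FourierRep (f : Torus → ℂ) : Prop :=
  ∀ x : Torus, HasSum (fun k : ℤ => fourierCoeff f k * fourier k x) (f x)

/-- The commutator `[ℍ; v]g = ℍ[vg] - v ℍ[g]`. -/
noncomputable def commHilbert (v f : Torus → ℂ) : Torus → ℂ := fun x =>
  hilbertT (fun y => v y * f y) x - v x * hilbertT f x

/-- The iterated commutator `[ℍ; [ℍ; v]]g = ℍ([ℍ;v]g) - [ℍ;v](ℍ[g])`. -/
noncomputable def comm2Hilbert (v f : Torus → ℂ) : Torus → ℂ := fun x =>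
  hilbertT (commHilbert v f) x - commHilbert v (hilbertT f) x

/-- The symbol `Λ₁(k,ℓ) = 2(kℓ - |k||ℓ|)` of the double commutator. -/
def Lambda1 (k l : ℤ) : ℂ := ((2 * (k * l - |k| * |l|) : ℤ) : ℂ)

/-- A smooth periodic function: its Fourier coefficients decay faster than any
polynomial and the Fourier series represents the function. -/
def SmoothRep (f : Torus → ℂ) : Prop :=
  (∀ n : ℕ, Summable fun k : ℤ => (1 + |(k : ℝ)|) ^ n * ‖fourierCoeff f k‖) ∧
    FourierRep f

namespace DblCommAux

/-- The Hilbert symbol. -/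
def msym (n : ℤ) : ℂ := -Complex.I * ((Int.sign n : ℤ) : ℂ)

lemma norm_fourier_eq (n : ℤ) (x : Torus) : ‖fourier n x‖ = 1 := Circle.norm_coe _

lemma norm_int_c (n : ℤ) : ‖(n : ℂ)‖ = |(n : ℝ)| := by
  rw [← Complex.ofReal_intCast, Complex.norm_real, Real.norm_eq_abs]

lemma norm_msym_le (n : ℤ) : ‖msym n‖ ≤ 1 := by
  rw [msym, norm_mul, norm_neg, Complex.norm_I, one_mul, norm_int_c]
  rcases lt_trichotomy n 0 with h | h | h
  · simp [Int.sign_eq_neg_one_iff_neg.mpr h]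
  · simp [h]
  · simp [Int.sign_eq_one_iff_pos.mpr h]

lemma int_id (k l : ℤ) :
    k * l * (Int.sign k - Int.sign l) ^ 2 = 2 * (k * l - |k| * |l|) := by
  rcases lt_trichotomy k 0 with hk | rfl | hk <;>
    rcases lt_trichotomy l 0 with hl | rfl | hl
  · rw [Int.sign_eq_neg_one_iff_neg.mpr hk, Int.sign_eq_neg_one_iff_neg.mpr hl,
      abs_of_neg hk, abs_of_neg hl]; ring
  · rw [Int.sign_eq_neg_one_iff_neg.mpr hk]; simp
  · rw [Int.sign_eq_neg_one_iff_neg.mpr hk, Int.sign_eq_one_iff_pos.mpr hl,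
      abs_of_neg hk, abs_of_pos hl]; ring
  · simp
  · simp
  · simp
  · rw [Int.sign_eq_one_iff_pos.mpr hk, Int.sign_eq_neg_one_iff_neg.mpr hl,
      abs_of_pos hk, abs_of_neg hl]; ring
  · rw [Int.sign_eq_one_iff_pos.mpr hk]; simp
  · rw [Int.sign_eq_one_iff_pos.mpr hk, Int.sign_eq_one_iff_pos.mpr hl,
      abs_of_pos hk, abs_of_pos hl]; ring

lemma key_scalar (k l : ℤ) :
    Complex.I * (k : ℂ) * (msym k - msym l) ^ 2 * (Complex.I * (l : ℂ)) = Lambda1 k l := by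
  rw [Lambda1, ← int_id k l]
  simp only [msym]
  push_cast
  linear_combination ((k : ℂ) * l * (((Int.sign k : ℤ) : ℂ) - ((Int.sign l : ℤ) : ℂ)) ^ 2 *
    (Complex.I ^ 2 - 1)) * Complex.I_sq

lemma term_eq (k l : ℤ) (B A : ℂ) :
    Complex.I * (k : ℂ) * ((msym k - msym l) ^ 2 * (B * (Complex.I * (l : ℂ) * A)))
      = Lambda1 k l * B * A := by
  linear_combination (B * A) * key_scalar k l

end DblCommAux

namespace DblCommAux

lemma lambda1_zero (k l : ℤ) (h : 0 ≤ k * l) : Lambda1 k l = 0 := by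
  rw [Lambda1]
  have : |k| * |l| = k * l := by rw [← abs_mul, abs_of_nonneg h]
  rw [this]
  simp

lemma lambda1_bound (k l : ℤ) : ‖Lambda1 k l‖ ≤ 2 * ((k : ℝ) - l) ^ 2 := by
  rw [Lambda1, norm_int_c]
  have h1 : |2 * (k * l - |k| * |l|)| ≤ 2 * (k - l) ^ 2 := by
    have h2 : k * l ≤ |k| * |l| := by
      calc k * l ≤ |k * l| := le_abs_self _
        _ = |k| * |l| := abs_mul _ _
    rw [abs_of_nonpos (by omega)]
    nlinarith [sq_nonneg (|k| - |l|), _root_.sq_abs k, _root_.sq_abs l]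
  calc |((2 * (k * l - |k| * |l|) : ℤ) : ℝ)| = ((|2 * (k * l - |k| * |l|)| : ℤ) : ℝ) := by
        push_cast [Int.cast_abs]; ring_nf
    _ ≤ (((2 * (k - l) ^ 2 : ℤ) : ℝ)) := by exact_mod_cast h1
    _ = 2 * ((k : ℝ) - l) ^ 2 := by push_cast; ring

open MeasureTheory

lemma integral_fourier (n : ℤ) :
    (∫ x : Torus, fourier n x ∂AddCircle.haarAddCircle) = if n = 0 then 1 else 0 := by
  split_ifs with h
  · subst h
    simp only [fourier_zero]
    simp
  · exact integral_eq_zero_of_add_right_eq_neg (μ := AddCircle.haarAddCircle)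
      (fourier_add_half_inv_index h Real.two_pi_pos)

lemma fourierCoeff_tsum (c : ℤ → ℂ) (hc : Summable fun n => ‖c n‖) (k : ℤ) :
    fourierCoeff (fun x : Torus => ∑' n : ℤ, c n * fourier n x) k = c k := by
  have hnorm : ∀ (n : ℤ) (x : Torus), ‖fourier (-k) x • (c n * fourier n x)‖ = ‖c n‖ := by
    intro n x
    rw [norm_smul, norm_mul, norm_fourier_eq, norm_fourier_eq, mul_one, one_mul]
  have hmeas : ∀ n : ℤ, AEStronglyMeasurable
      (fun x : Torus => fourier (-k) x • (c n * fourier n x)) AddCircle.haarAddCircle := by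
    intro n
    exact (((fourier (-k)).continuous).smul (continuous_const.mul (fourier n).continuous)).aestronglyMeasurable
  have hint : (∑' n : ℤ, ∫⁻ x : Torus, ‖fourier (-k) x • (c n * fourier n x)‖₊
      ∂AddCircle.haarAddCircle) ≠ ⊤ := by
    have h1 : ∀ n : ℤ, (∫⁻ x : Torus, ‖fourier (-k) x • (c n * fourier n x)‖₊
        ∂AddCircle.haarAddCircle) = (‖c n‖₊ : ENNReal) := by
      intro n
      have : (fun x : Torus => (‖fourier (-k) x • (c n * fourier n x)‖₊ : ENNReal))
          = fun _ => (‖c n‖₊ : ENNReal) := by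
        funext x
        congr 1
        ext
        simp [hnorm n x, Circle.norm_coe]
      rw [this, lintegral_const, measure_univ, mul_one]
    simp_rw [h1]
    rw [ENNReal.tsum_coe_ne_top_iff_summable]
    exact NNReal.summable_coe.mp (by simpa [coe_nnnorm] using hc)
  have hrw : fourierCoeff (fun x : Torus => ∑' n : ℤ, c n * fourier n x) k
      = ∫ x : Torus, ∑' n : ℤ, fourier (-k) x • (c n * fourier n x) ∂AddCircle.haarAddCircle := by
    rw [fourierCoeff]
    congr 1
    funext x
    rw [smul_eq_mul, ← tsum_mul_left]
    exact tsum_congr fun n => by rw [smul_eq_mul]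
  rw [hrw, integral_tsum hmeas hint]
  have h2 : ∀ n : ℤ, (∫ x : Torus, fourier (-k) x • (c n * fourier n x)
      ∂AddCircle.haarAddCircle) = if n = k then c n else 0 := by
    intro n
    have : (fun x : Torus => fourier (-k) x • (c n * fourier n x))
        = fun x : Torus => c n * fourier (n + -k) x := by
      funext x
      rw [smul_eq_mul, fourier_add]; ring
    rw [this, integral_const_mul, integral_fourier]
    by_cases h : n = k
    · simp [h]
    · have : ¬(n + -k = 0) := by omega
      simp [this, h]
  simp_rw [h2]
  rw [tsum_eq_single k (fun n hn => by simp [hn])]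
  simp

end DblCommAux

namespace DblCommAux

/-- A function together with its summable Fourier coefficient sequence. -/
structure NiceC (g : Torus → ℂ) (c : ℤ → ℂ) : Prop where
  summ : Summable fun n : ℤ => ‖c n‖
  rep : ∀ x : Torus, HasSum (fun n : ℤ => c n * fourier n x) (g x)

lemma NiceC.coeff {g : Torus → ℂ} {c : ℤ → ℂ} (h : NiceC g c) (k : ℤ) :
    fourierCoeff g k = c k := by
  have hg : g = fun x => ∑' n : ℤ, c n * fourier n x :=
    funext fun x => ((h.rep x).tsum_eq).symm
  rw [hg, fourierCoeff_tsum c h.summ]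

lemma summable_mul_fourier {c : ℤ → ℂ} (hc : Summable fun n => ‖c n‖) (x : Torus) :
    Summable fun n : ℤ => c n * fourier n x := by
  refine Summable.of_norm ?_
  simpa [norm_mul, norm_fourier_eq, Circle.norm_coe] using hc

lemma NiceC.hilbert {g : Torus → ℂ} {c : ℤ → ℂ} (h : NiceC g c) :
    NiceC (hilbertT g) (fun n => msym n * c n) := by
  have hs : Summable fun n : ℤ => ‖msym n * c n‖ := by
    refine Summable.of_nonneg_of_le (fun n => norm_nonneg _) (fun n => ?_) h.summ
    rw [norm_mul]
    exact mul_le_of_le_one_left (norm_nonneg _) (norm_msym_le n)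
  refine ⟨hs, fun x => ?_⟩
  have hrw : hilbertT g x = ∑' n : ℤ, msym n * c n * fourier n x := by
    rw [hilbertT]
    exact tsum_congr fun n => by rw [h.coeff n, msym]
  rw [hrw]
  exact (summable_mul_fourier hs x).hasSum

lemma NiceC.deriv {g : Torus → ℂ} {c : ℤ → ℂ} (h : NiceC g c)
    (h1 : Summable fun n : ℤ => |(n : ℝ)| * ‖c n‖) :
    NiceC (derivT g) (fun n => Complex.I * (n : ℂ) * c n) := by
  have hs : Summable fun n : ℤ => ‖Complex.I * (n : ℂ) * c n‖ := by
    refine Summable.of_nonneg_of_le (fun n => norm_nonneg _) (fun n => ?_) h1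
    rw [norm_mul, norm_mul, Complex.norm_I, one_mul, norm_int_c]
  refine ⟨hs, fun x => ?_⟩
  have hrw : derivT g x = ∑' n : ℤ, Complex.I * (n : ℂ) * c n * fourier n x := by
    rw [derivT]
    exact tsum_congr fun n => by rw [h.coeff n]
  rw [hrw]
  exact (summable_mul_fourier hs x).hasSum

lemma NiceC.sub {g h : Torus → ℂ} {c d : ℤ → ℂ} (h1 : NiceC g c) (h2 : NiceC h d) :
    NiceC (fun x => g x - h x) (fun n => c n - d n) := by
  refine ⟨?_, fun x => ?_⟩
  · refine Summable.of_nonneg_of_le (fun n => norm_nonneg _) (fun n => norm_sub_le _ _)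
      (h1.summ.add h2.summ)
  · have := (h1.rep x).sub (h2.rep x)
    simpa [sub_mul] using this

lemma shear_inj : Function.Injective (fun p : ℤ × ℤ => (p.1 - p.2, p.2) : ℤ × ℤ → ℤ × ℤ) := by
  rintro ⟨a, b⟩ ⟨c, d⟩ h
  simp only [Prod.mk.injEq] at h ⊢
  omega

/-- The shear equivalence `(k, l) ↦ (k + l, l)` of `ℤ × ℤ`. -/
def shear : ℤ × ℤ ≃ ℤ × ℤ where
  toFun p := (p.1 - p.2, p.2)
  invFun p := (p.1 + p.2, p.2)
  left_inv p := by simp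
  right_inv p := by simp

lemma summable_pair_norm {b c : ℤ → ℂ} (hb : Summable fun n => ‖b n‖)
    (hc : Summable fun n => ‖c n‖) :
    Summable fun p : ℤ × ℤ => ‖b (p.1 - p.2)‖ * ‖c p.2‖ := by
  have h0 : Summable fun p : ℤ × ℤ => ‖b p.1‖ * ‖c p.2‖ :=
    hb.mul_of_nonneg hc (fun _ => norm_nonneg _) fun _ => norm_nonneg _
  have h1 := h0.comp_injective shear_inj
  exact h1

lemma summable_fiber {b c : ℤ → ℂ} (hb : Summable fun n => ‖b n‖)
    (hc : Summable fun n => ‖c n‖) (k : ℤ) :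
    Summable fun l : ℤ => ‖b (k - l)‖ * ‖c l‖ :=
  (summable_pair_norm hb hc).prod_factor k

lemma summable_conv_fiber {b c : ℤ → ℂ} (hb : Summable fun n => ‖b n‖)
    (hc : Summable fun n => ‖c n‖) (k : ℤ) :
    Summable fun l : ℤ => b (k - l) * c l := by
  refine Summable.of_norm ?_
  simpa [norm_mul] using summable_fiber hb hc k

set_option maxHeartbeats 2000000 in
lemma NiceC.mul {v g : Torus → ℂ} {b c : ℤ → ℂ} (hv : NiceC v b) (hg : NiceC g c) :
    NiceC (fun x => v x * g x) (fun k => ∑' l : ℤ, b (k - l) * c l) := by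
  constructor
  · -- summability of the convolution
    have hK : Summable fun k : ℤ => ∑' l : ℤ, ‖b (k - l)‖ * ‖c l‖ :=
      (summable_pair_norm hv.summ hg.summ).prod
    refine Summable.of_nonneg_of_le (fun k => norm_nonneg _) (fun k => ?_) hK
    calc ‖∑' l : ℤ, b (k - l) * c l‖ ≤ ∑' l : ℤ, ‖b (k - l) * c l‖ :=
          norm_tsum_le_tsum_norm (by simpa [norm_mul] using summable_fiber hv.summ hg.summ k)
      _ = ∑' l : ℤ, ‖b (k - l)‖ * ‖c l‖ := tsum_congr fun l => norm_mul _ _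
  · intro x
    beta_reduce
    have hbx : Summable fun m : ℤ => ‖b m * fourier m x‖ := by
      simpa [norm_mul, norm_fourier_eq, Circle.norm_coe] using hv.summ
    have hcx : Summable fun m : ℤ => ‖c m * fourier m x‖ := by
      simpa [norm_mul, norm_fourier_eq, Circle.norm_coe] using hg.summ
    have hs := summable_mul_of_summable_norm hbx hcx
    have H := HasSum.mul (hv.rep x) (hg.rep x) hs
    beta_reduce at H
    have H2 := (shear.hasSum_iff).mpr H
    have H2' : HasSum (fun p : ℤ × ℤ =>
        (b (p.1 - p.2) * fourier (p.1 - p.2) x) * (c p.2 * fourier p.2 x)) (v x * g x) := by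
      simpa [shear, Function.comp_def] using H2
    have hfun : (fun p : ℤ × ℤ =>
        (b (p.1 - p.2) * fourier (p.1 - p.2) x) * (c p.2 * fourier p.2 x))
        = fun p : ℤ × ℤ => (b (p.1 - p.2) * c p.2) * fourier p.1 x := by
      funext p
      have hf := fourier_add (T := 2 * π) (m := p.1 - p.2) (n := p.2) (x := x)
      have h12 : p.1 - p.2 + p.2 = p.1 := by omega
      rw [h12] at hf
      rw [hf]; ring
    rw [hfun] at H2'
    exact H2'.prod_fiberwise fun k =>
      ((summable_conv_fiber hv.summ hg.summ k).hasSum.mul_right _)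

end DblCommAux

namespace DblCommAux

/-- Rapid decay of a coefficient sequence. -/
def RD (c : ℤ → ℂ) : Prop :=
  ∀ n : ℕ, Summable fun k : ℤ => (1 + |(k : ℝ)|) ^ n * ‖c k‖

lemma RD.norm_summable {c : ℤ → ℂ} (h : RD c) : Summable fun k : ℤ => ‖c k‖ := by
  simpa using h 0

lemma RD.of_le {c d : ℤ → ℂ} (hd : RD d) (hle : ∀ k, ‖c k‖ ≤ ‖d k‖) : RD c := fun n => by
  refine (hd n).of_nonneg_of_le (fun k => by positivity) (fun k => ?_)
  have h1 : (0 : ℝ) ≤ (1 + |(k : ℝ)|) ^ n := by positivity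
  exact mul_le_mul_of_nonneg_left (hle k) h1

lemma RD.weight1 {c : ℤ → ℂ} (h : RD c) : Summable fun k : ℤ => |(k : ℝ)| * ‖c k‖ := by
  refine (h 1).of_nonneg_of_le (fun k => by positivity) (fun k => ?_)
  have : |(k : ℝ)| ≤ (1 + |(k : ℝ)|) ^ 1 := by
    rw [pow_one]; linarith [abs_nonneg (k : ℝ)]
  exact mul_le_mul_of_nonneg_right this (norm_nonneg _)

lemma RD.msym_mul {c : ℤ → ℂ} (h : RD c) : RD fun k => msym k * c k :=
  h.of_le fun k => by
    rw [norm_mul]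
    exact mul_le_of_le_one_left (norm_nonneg _) (norm_msym_le k)

lemma RD.deriv {c : ℤ → ℂ} (h : RD c) : RD fun k => Complex.I * (k : ℂ) * c k := fun n => by
  refine (h (n + 1)).of_nonneg_of_le (fun k => by positivity) (fun k => ?_)
  rw [norm_mul, norm_mul, Complex.norm_I, one_mul, norm_int_c]
  calc (1 + |(k : ℝ)|) ^ n * (|(k : ℝ)| * ‖c k‖)
      = ((1 + |(k : ℝ)|) ^ n * |(k : ℝ)|) * ‖c k‖ := by ring
    _ ≤ ((1 + |(k : ℝ)|) ^ n * (1 + |(k : ℝ)|)) * ‖c k‖ := by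
        gcongr
        linarith [abs_nonneg (k : ℝ)]
    _ = (1 + |(k : ℝ)|) ^ (n + 1) * ‖c k‖ := by rw [pow_succ]

lemma RD.sub {c d : ℤ → ℂ} (h1 : RD c) (h2 : RD d) : RD fun k => c k - d k := fun n => by
  refine ((h1 n).add (h2 n)).of_nonneg_of_le (fun k => by positivity) (fun k => ?_)
  calc (1 + |(k : ℝ)|) ^ n * ‖c k - d k‖
      ≤ (1 + |(k : ℝ)|) ^ n * (‖c k‖ + ‖d k‖) := by
        gcongr
        exact norm_sub_le _ _
    _ = (1 + |(k : ℝ)|) ^ n * ‖c k‖ + (1 + |(k : ℝ)|) ^ n * ‖d k‖ := by ring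

lemma RD.conv {b c : ℤ → ℂ} (hb : RD b) (hc : RD c) :
    RD fun k => ∑' l : ℤ, b (k - l) * c l := fun n => by
  have hBC : Summable (fun p : ℤ × ℤ =>
      ((1 + |((p.1 - p.2 : ℤ) : ℝ)|) ^ n * ‖b (p.1 - p.2)‖)
        * ((1 + |(p.2 : ℝ)|) ^ n * ‖c p.2‖)) := by
    have h0 := (hb n).mul_of_nonneg (hc n) (fun k => by positivity) (fun k => by positivity)
    have h1 := h0.comp_injective shear_inj
    simpa [Function.comp_def] using h1
  have hK : Summable fun k : ℤ => ∑' l : ℤ,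
      ((1 + |((k - l : ℤ) : ℝ)|) ^ n * ‖b (k - l)‖) * ((1 + |(l : ℝ)|) ^ n * ‖c l‖) :=
    hBC.prod
  refine hK.of_nonneg_of_le (fun k => by positivity) (fun k => ?_)
  have hfib : Summable fun l : ℤ => ‖b (k - l)‖ * ‖c l‖ :=
    summable_fiber hb.norm_summable hc.norm_summable k
  have key : ∀ l : ℤ, (1 + |(k : ℝ)|) ^ n * (‖b (k - l)‖ * ‖c l‖)
      ≤ ((1 + |((k - l : ℤ) : ℝ)|) ^ n * ‖b (k - l)‖) * ((1 + |(l : ℝ)|) ^ n * ‖c l‖) := by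
    intro l
    have habs : (1 : ℝ) + |(k : ℝ)| ≤ (1 + |((k - l : ℤ) : ℝ)|) * (1 + |(l : ℝ)|) := by
      have h1 : |(k : ℝ)| ≤ |((k - l : ℤ) : ℝ)| + |(l : ℝ)| := by
        push_cast
        calc |(k : ℝ)| = |((k : ℝ) - l) + l| := by ring_nf
          _ ≤ |(k : ℝ) - l| + |(l : ℝ)| := abs_add_le _ _
      nlinarith [abs_nonneg ((k : ℝ) - l), abs_nonneg (l : ℝ),
        abs_nonneg (((k - l : ℤ) : ℝ)), mul_nonneg (abs_nonneg (((k - l : ℤ) : ℝ))) (abs_nonneg (l : ℝ))]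
    have hp : (1 + |(k : ℝ)|) ^ n
        ≤ (1 + |((k - l : ℤ) : ℝ)|) ^ n * (1 + |(l : ℝ)|) ^ n := by
      rw [← mul_pow]
      exact pow_le_pow_left₀ (by positivity) habs n
    calc (1 + |(k : ℝ)|) ^ n * (‖b (k - l)‖ * ‖c l‖)
        ≤ ((1 + |((k - l : ℤ) : ℝ)|) ^ n * (1 + |(l : ℝ)|) ^ n) * (‖b (k - l)‖ * ‖c l‖) :=
          mul_le_mul_of_nonneg_right hp (by positivity)
      _ = ((1 + |((k - l : ℤ) : ℝ)|) ^ n * ‖b (k - l)‖) * ((1 + |(l : ℝ)|) ^ n * ‖c l‖) := by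
          ring
  calc (1 + |(k : ℝ)|) ^ n * ‖∑' l : ℤ, b (k - l) * c l‖
      ≤ (1 + |(k : ℝ)|) ^ n * ∑' l : ℤ, ‖b (k - l)‖ * ‖c l‖ := by
        gcongr
        calc ‖∑' l : ℤ, b (k - l) * c l‖ ≤ ∑' l : ℤ, ‖b (k - l) * c l‖ :=
              norm_tsum_le_tsum_norm (by simpa [norm_mul] using hfib)
          _ = ∑' l : ℤ, ‖b (k - l)‖ * ‖c l‖ := tsum_congr fun l => norm_mul _ _
    _ = ∑' l : ℤ, (1 + |(k : ℝ)|) ^ n * (‖b (k - l)‖ * ‖c l‖) := tsum_mul_left.symm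
    _ ≤ ∑' l : ℤ, ((1 + |((k - l : ℤ) : ℝ)|) ^ n * ‖b (k - l)‖)
          * ((1 + |(l : ℝ)|) ^ n * ‖c l‖) :=
        Summable.tsum_le_tsum key (hfib.mul_left _) (hBC.prod_factor k)
  
end DblCommAux

namespace DblCommAux

lemma summable_conv_fiber1 {b d : ℤ → ℂ} (hb : Summable fun n => ‖b n‖)
    (hd : Summable fun n => ‖d n‖) (k : ℤ) :
    Summable fun l : ℤ => b (k - l) * (msym l * d l) := by
  refine Summable.of_norm ?_
  refine (summable_fiber hb hd k).of_nonneg_of_le (fun l => norm_nonneg _) (fun l => ?_)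
  rw [norm_mul]
  refine mul_le_mul_of_nonneg_left ?_ (norm_nonneg _)
  rw [norm_mul]
  exact mul_le_of_le_one_left (norm_nonneg _) (norm_msym_le l)

lemma summable_conv_fiber2 {b d : ℤ → ℂ} (hb : Summable fun n => ‖b n‖)
    (hd : Summable fun n => ‖d n‖) (k : ℤ) :
    Summable fun l : ℤ => b (k - l) * (msym l * (msym l * d l)) := by
  refine Summable.of_norm ?_
  refine (summable_fiber hb hd k).of_nonneg_of_le (fun l => norm_nonneg _) (fun l => ?_)
  rw [norm_mul]
  refine mul_le_mul_of_nonneg_left ?_ (norm_nonneg _)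
  have h1 : ‖msym l * d l‖ ≤ ‖d l‖ := by
    rw [norm_mul]; exact mul_le_of_le_one_left (norm_nonneg _) (norm_msym_le l)
  calc ‖msym l * (msym l * d l)‖ ≤ ‖msym l * d l‖ := by
        rw [norm_mul]; exact mul_le_of_le_one_left (norm_nonneg _) (norm_msym_le l)
    _ ≤ ‖d l‖ := h1

lemma final_alg (k : ℤ) {b d : ℤ → ℂ} (hb : Summable fun n => ‖b n‖)
    (hd : Summable fun n => ‖d n‖) :
    Complex.I * (k : ℂ) *
      (msym k * (msym k * (∑' l : ℤ, b (k - l) * d l)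
          - ∑' l : ℤ, b (k - l) * (msym l * d l))
        - (msym k * (∑' l : ℤ, b (k - l) * (msym l * d l))
          - ∑' l : ℤ, b (k - l) * (msym l * (msym l * d l))))
      = ∑' l : ℤ, Complex.I * (k : ℂ) * ((msym k - msym l) ^ 2 * (b (k - l) * d l)) := by
  have SX : Summable fun l : ℤ => b (k - l) * d l := summable_conv_fiber hb hd k
  have SY : Summable fun l : ℤ => b (k - l) * (msym l * d l) := summable_conv_fiber1 hb hd k
  have SZ : Summable fun l : ℤ => b (k - l) * (msym l * (msym l * d l)) :=
    summable_conv_fiber2 hb hd k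
  have h1 := ((SX.hasSum.mul_left (msym k)).sub SY.hasSum).mul_left (msym k)
  have h2 := (SY.hasSum.mul_left (msym k)).sub SZ.hasSum
  have h3 := h1.sub h2
  beta_reduce at h3
  have hfe : (fun l : ℤ => msym k * (msym k * (b (k - l) * d l) - b (k - l) * (msym l * d l))
      - (msym k * (b (k - l) * (msym l * d l)) - b (k - l) * (msym l * (msym l * d l))))
      = fun l : ℤ => (msym k - msym l) ^ 2 * (b (k - l) * d l) := by
    funext l
    ring
  rw [hfe] at h3
  rw [← h3.tsum_eq, tsum_mul_left]

end DblCommAux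

open DblCommAux in
set_option maxHeartbeats 2000000 in
/-- For smooth periodic `v`, `f` and all `k ≠ 0`, the `k`-th Fourier coefficient
of `([ℍ;[ℍ;v]]f_x)_x` equals the convolution `Σ_ℓ Λ₁(k,ℓ) v̂(k-ℓ) f̂(ℓ)` with
`Λ₁(k,ℓ) = 2(kℓ - |k||ℓ|)`; moreover `Λ₁(k,ℓ) = 0` whenever `kℓ ≥ 0`, and
`|Λ₁(k,ℓ)| ≤ 2(k-ℓ)²` for all `k, ℓ ∈ ℤ`.  (Here the normalized Fourier
coefficients of Mathlib are used, so the convolution carries no `1/2π`.) -/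
theorem double_commutator_symbol (v f : Torus → ℂ)
    (hv : SmoothRep v) (hf : SmoothRep f) :
    (∀ k : ℤ, k ≠ 0 →
      fourierCoeff (derivT (comm2Hilbert v (derivT f))) k
        = ∑' l : ℤ, Lambda1 k l * fourierCoeff v (k - l) * fourierCoeff f l) ∧
    (∀ k l : ℤ, 0 ≤ k * l → Lambda1 k l = 0) ∧
    (∀ k l : ℤ, ‖Lambda1 k l‖ ≤ 2 * ((k : ℝ) - l) ^ 2) := by
  obtain ⟨hv1, hv2⟩ := hv
  obtain ⟨hf1, hf2⟩ := hf
  refine ⟨?_, fun k l h => lambda1_zero k l h, fun k l => lambda1_bound k l⟩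
  intro k _
  have rd_a : RD (fourierCoeff f) := hf1
  have rd_b : RD (fourierCoeff v) := hv1
  have n_f : NiceC f (fourierCoeff f) := ⟨rd_a.norm_summable, hf2⟩
  have n_v : NiceC v (fourierCoeff v) := ⟨rd_b.norm_summable, hv2⟩
  have n_g := n_f.deriv rd_a.weight1
  have rd_d := rd_a.deriv
  have n_vg := n_v.mul n_g
  beta_reduce at n_vg
  have n1 := n_vg.hilbert
  have n_hg := n_g.hilbert
  have n2 := n_v.mul n_hg
  beta_reduce at n2
  have n_c1 := n1.sub n2
  beta_reduce at n_c1
  have n_hc1 := n_c1.hilbert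
  have n_hg2 := n_hg.hilbert
  beta_reduce at n_hg2
  have n_vhg := n_v.mul n_hg
  beta_reduce at n_vhg
  have n_vh2g := n_v.mul n_hg2
  beta_reduce at n_vh2g
  have n_c2 := n_vhg.hilbert.sub n_vh2g
  beta_reduce at n_c2
  have n_cc := n_hc1.sub n_c2
  beta_reduce at n_cc
  -- rapid decay chain
  have rd_md := rd_d.msym_mul
  beta_reduce at rd_md
  have rd_mmd := rd_md.msym_mul
  beta_reduce at rd_mmd
  have rd_X := rd_b.conv rd_d
  beta_reduce at rd_X
  have rd_Y := rd_b.conv rd_md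
  beta_reduce at rd_Y
  have rd_Z := rd_b.conv rd_mmd
  beta_reduce at rd_Z
  have rd_c1 := (rd_X.msym_mul).sub rd_Y
  beta_reduce at rd_c1
  have rd_c2 := (rd_Y.msym_mul).sub rd_Z
  beta_reduce at rd_c2
  have rd_Q := (rd_c1.msym_mul).sub rd_c2
  beta_reduce at rd_Q
  have n_fin := n_cc.deriv rd_Q.weight1
  beta_reduce at n_fin
  have hc := n_fin.coeff k
  have hd : Summable fun n : ℤ => ‖Complex.I * (n : ℂ) * fourierCoeff f n‖ := by
    have := rd_d.norm_summable
    beta_reduce at this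
    exact this
  have FA := final_alg k rd_b.norm_summable hd
  beta_reduce at FA
  unfold comm2Hilbert commHilbert
  beta_reduce
  rw [hc]
  beta_reduce
  rw [FA]
  exact tsum_congr fun l => term_eq k l (fourierCoeff v (k - l)) (fourierCoeff f l)
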